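/- Let B₀ be an invertible n×n complex matrix and let A₀ be the 2n×2n block matrix [[0, I], [B₀, 0]]. Then A₀ is diagonalizable if and only if B₀ is diagonalizable. -/

import Mathlib

open Matrix

/-- A square complex matrix is diagonalizable if it is similar to a diagonal matrix. -/
def IsDiagonalizable {m : Type*} [Fintype m] [DecidableEq m] (M : Matrix m m ℂ) : Prop :=
  ∃ P : Matrix m m ℂ, IsUnit P.det ∧ (P⁻¹ * M * P).IsDiag

lemma isDiagonalizable_of_spanning_eigenvectors {n : ℕ} (M : Matrix (Fin n) (Fin n) ℂ)
    {ι : Type*} [Fintype ι] (x : ι → Fin n → ℂ) (μ : ι → ℂ)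
    (hx : ∀ j, M.mulVec (x j) = μ j • x j)
    (hspan : Submodule.span ℂ (Set.range x) = ⊤) : IsDiagonalizable M := by
  obtain ⟨b, hbs, hbspan, hbli⟩ := exists_linearIndependent ℂ (Set.range x)
  rw [hspan] at hbspan
  haveI : Fintype b := ((Set.finite_range x).subset hbs).fintype
  let basis : Module.Basis b ℂ (Fin n → ℂ) := Module.Basis.mk hbli (by rw [Subtype.range_coe, hbspan])
  have hcard : Fintype.card b = n := by
    have := Module.finrank_eq_card_basis basis
    simpa [Module.finrank_pi] using this.symm
  let e : Fin n ≃ b := (Fintype.equivFinOfCardEq hcard).symm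
  have hb_eig : ∀ v : b, ∃ μv : ℂ, M.mulVec (v : Fin n → ℂ) = μv • (v : Fin n → ℂ) := by
    rintro ⟨v, hv⟩
    obtain ⟨j, rfl⟩ := hbs hv
    exact ⟨μ j, hx j⟩
  choose ν hν using hb_eig
  let P : Matrix (Fin n) (Fin n) ℂ := Matrix.of fun i k => (e k : Fin n → ℂ) i
  have hMP : M * P = P * Matrix.diagonal (fun k => ν (e k)) := by
    ext i k
    have h1 : (M * P) i k = M.mulVec (fun i' => (e k : Fin n → ℂ) i') i := by
      simp [Matrix.mul_apply, Matrix.mulVec, dotProduct, P]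
    rw [h1]
    have := congrFun (hν (e k)) i
    simp only [Pi.smul_apply, smul_eq_mul] at this
    rw [Matrix.mul_diagonal]
    simpa [P, mul_comm] using this
  have hPdet : IsUnit P.det := by
    rw [← Matrix.isUnit_iff_isUnit_det, ← Matrix.mulVec_surjective_iff_isUnit]
    intro v
    have hv : v ∈ Submodule.span ℂ (Set.range fun k : Fin n => (e k : Fin n → ℂ)) := by
      have : (Set.range fun k : Fin n => (e k : Fin n → ℂ)) = b := by
        rw [show (fun k : Fin n => (e k : Fin n → ℂ)) = ((↑) : b → (Fin n → ℂ)) ∘ e from rfl,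
          Set.range_comp, Equiv.range_eq_univ, Set.image_univ, Subtype.range_coe]
      rw [this, hbspan]; trivial
    rw [Finsupp.mem_span_range_iff_exists_finsupp] at hv
    obtain ⟨c, hc⟩ := hv
    refine ⟨fun k => c k, ?_⟩
    ext i
    rw [← hc]
    simp [Matrix.mulVec, dotProduct, P, Finsupp.sum_fintype, mul_comm]
  exact ⟨P, hPdet, by
    rw [Matrix.mul_assoc, hMP, ← Matrix.mul_assoc, Matrix.nonsing_inv_mul _ hPdet, Matrix.one_mul]
    exact Matrix.isDiag_diagonal _⟩

theorem blockMatrix_diagonalizable_iff (n : ℕ) (B₀ : Matrix (Fin n) (Fin n) ℂ)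
    (hB₀ : IsUnit B₀.det) :
    IsDiagonalizable (Matrix.fromBlocks (0 : Matrix (Fin n) (Fin n) ℂ) 1 B₀ 0) ↔
      IsDiagonalizable B₀ := by
  set A₀ : Matrix (Fin n ⊕ Fin n) (Fin n ⊕ Fin n) ℂ :=
    Matrix.fromBlocks (0 : Matrix (Fin n) (Fin n) ℂ) 1 B₀ 0 with hA₀
  constructor
  · -- A₀ diagonalizable → B₀ diagonalizable
    rintro ⟨Q, hQ, hdiag⟩
    set d : (Fin n ⊕ Fin n) → ℂ := (Q⁻¹ * A₀ * Q).diag with hd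
    have hAQ : A₀ * Q = Q * Matrix.diagonal d := by
      rw [hd, hdiag.diagonal_diag, ← Matrix.mul_assoc, ← Matrix.mul_assoc,
        Matrix.mul_nonsing_inv _ hQ, Matrix.one_mul]
    set x : (Fin n ⊕ Fin n) → Fin n → ℂ := fun j i => Q (Sum.inl i) j with hxdef
    have hy : ∀ j i, Q (Sum.inr i) j = d j * Q (Sum.inl i) j := by
      intro j i
      have h := Matrix.ext_iff.mpr hAQ (Sum.inl i) j
      rw [Matrix.mul_diagonal] at h
      simpa [A₀, Matrix.mul_apply, Fintype.sum_sum_type, Matrix.one_apply, mul_comm] using h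
    have heig : ∀ j, B₀.mulVec (x j) = (d j * d j) • x j := by
      intro j
      ext i
      have h := Matrix.ext_iff.mpr hAQ (Sum.inr i) j
      rw [Matrix.mul_diagonal] at h
      simp only [A₀, Matrix.mul_apply, Fintype.sum_sum_type,
        Matrix.fromBlocks_apply₂₁, Matrix.fromBlocks_apply₂₂, Matrix.zero_apply,
        zero_mul, Finset.sum_const_zero, add_zero] at h
      have hBi : B₀.mulVec (x j) i = Q (Sum.inr i) j * d j := by
        simpa [Matrix.mulVec, dotProduct, hxdef] using h
      rw [hBi, hy j i]
      simp only [Pi.smul_apply, smul_eq_mul, hxdef]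
      ring
    have hspan : Submodule.span ℂ (Set.range x) = ⊤ := by
      rw [eq_top_iff]
      rintro v -
      rw [Submodule.mem_span_range_iff_exists_fun]
      set c : (Fin n ⊕ Fin n) → ℂ := Q⁻¹.mulVec (Sum.elim v 0) with hc
      have hQc : Q.mulVec c = Sum.elim v 0 := by
        rw [hc, Matrix.mulVec_mulVec, Matrix.mul_nonsing_inv _ hQ, Matrix.one_mulVec]
      refine ⟨c, ?_⟩
      ext i
      have := congrFun hQc (Sum.inl i)
      simp only [Matrix.mulVec, dotProduct, Sum.elim_inl] at this
      simpa [Finset.sum_apply, hxdef, mul_comm] using this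
    exact isDiagonalizable_of_spanning_eigenvectors B₀ x (fun j => d j * d j) heig hspan
  · -- B₀ diagonalizable → A₀ diagonalizable
    rintro ⟨P, hP, hdiag⟩
    set D : Matrix (Fin n) (Fin n) ℂ := P⁻¹ * B₀ * P with hDdef
    have hD : Matrix.diagonal D.diag = D := hdiag.diagonal_diag
    have hBP : B₀ * P = P * D := by
      rw [hDdef, ← Matrix.mul_assoc, ← Matrix.mul_assoc, Matrix.mul_nonsing_inv _ hP,
        Matrix.one_mul]
    have hdetD : IsUnit D.det := by
      rw [hDdef, Matrix.det_mul, Matrix.det_mul]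
      exact ((P.isUnit_nonsing_inv_det hP).mul hB₀).mul hP
    have hdne : ∀ i, D.diag i ≠ 0 := by
      intro i hi
      rw [← hD, Matrix.det_diagonal] at hdetD
      have := hdetD.ne_zero
      rw [Finset.prod_eq_zero (Finset.mem_univ i) hi] at this
      exact this rfl
    have hsq : ∀ i, ∃ s : ℂ, s ^ 2 = D.diag i := fun i =>
      IsAlgClosed.exists_pow_nat_eq (D.diag i) two_pos
    choose s hs using hsq
    have hsne : ∀ i, s i ≠ 0 := by
      intro i h
      apply hdne i
      rw [← hs i, h]
      ring
    set S : Matrix (Fin n) (Fin n) ℂ := Matrix.diagonal s with hSdef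
    have hSS : S * S = D := by
      have hfun : (fun i => s i * s i) = D.diag := by
        funext i
        rw [← hs i]
        ring
      rw [hSdef, Matrix.diagonal_mul_diagonal, hfun, hD]
    set Q : Matrix (Fin n ⊕ Fin n) (Fin n ⊕ Fin n) ℂ :=
      Matrix.fromBlocks P P (P * S) (-(P * S)) with hQdef
    have hQfac : Q = Matrix.fromBlocks P 0 0 P * Matrix.fromBlocks 1 1 S (-S) := by
      rw [hQdef, Matrix.fromBlocks_multiply]
      simp [Matrix.mul_neg]
    have hdetQ : IsUnit Q.det := by
      rw [hQfac, Matrix.det_mul, Matrix.det_fromBlocks_zero₂₁, Matrix.det_fromBlocks_one₁₁]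
      have h2 : -S - S * 1 = Matrix.diagonal (fun i => -(2 * s i)) := by
        ext i j
        rcases eq_or_ne i j with rfl | hij
        · simp [hSdef, Matrix.mul_one]
          ring
        · simp [hSdef, Matrix.mul_one, Matrix.diagonal_apply_ne _ hij]
      rw [h2, Matrix.det_diagonal]
      refine (hP.mul hP).mul (isUnit_iff_ne_zero.mpr ?_)
      exact Finset.prod_ne_zero_iff.mpr fun i _ => by simpa using hsne i
    have hAQ : A₀ * Q = Q * Matrix.fromBlocks S 0 0 (-S) := by
      rw [hA₀, hQdef, Matrix.fromBlocks_multiply, Matrix.fromBlocks_multiply]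
      have h1 : B₀ * P = P * S * S := by rw [Matrix.mul_assoc, hSS, hBP]
      simp [Matrix.mul_neg, Matrix.neg_mul, h1]
    refine ⟨Q, hdetQ, ?_⟩
    rw [Matrix.mul_assoc, hAQ, ← Matrix.mul_assoc, Matrix.nonsing_inv_mul _ hdetQ,
      Matrix.one_mul]
    exact Matrix.IsDiag.fromBlocks (Matrix.isDiag_diagonal s)
      ((Matrix.isDiag_diagonal s).neg)
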